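/- Let p be an odd prime, q a power of p, and let g ∈ SL_n(F_q) be a semisimple element, i.e., an element whose order is coprime to p. Then the SL_n(F_q)-conjugacy class of g is invariant under conjugation by GL_n(F_q): for every x ∈ GL_n(F_q) there exists h ∈ SL_n(F_q) with x g x⁻¹ = h g h⁻¹. -/

import Mathlib

open Polynomial LinearMap

section DetHelpers

variable {K V : Type*} [Field K] [AddCommGroup V] [Module K V]

lemma det_prodMap {M N : Type*} [AddCommGroup M] [AddCommGroup N] [Module K M] [Module K N]
    [FiniteDimensional K M] [FiniteDimensional K N] (f : Module.End K M) (g : Module.End K N) :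
    LinearMap.det (f.prodMap g) = LinearMap.det f * LinearMap.det g := by
  classical
  let bM := Module.finBasis K M
  let bN := Module.finBasis K N
  rw [← LinearMap.det_toMatrix (bM.prod bN), LinearMap.toMatrix_prodMap bM bN f g,
    Matrix.det_fromBlocks_zero₂₁, LinearMap.det_toMatrix, LinearMap.det_toMatrix]

noncomputable def extEnd {A B : Submodule K V} (h : IsCompl A B) (t : Module.End K A) :
    Module.End K V :=
  (Submodule.prodEquivOfIsCompl A B h).toLinearMap ∘ₗ (t.prodMap LinearMap.id) ∘ₗ
    (Submodule.prodEquivOfIsCompl A B h).symm.toLinearMap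

lemma extEnd_apply_left {A B : Submodule K V} (h : IsCompl A B) (t : Module.End K A)
    (a : A) : extEnd h t (a : V) = (t a : V) := by
  simp [extEnd, Submodule.prodEquivOfIsCompl_symm_apply_left,
    Submodule.coe_prodEquivOfIsCompl']

lemma extEnd_apply_right {A B : Submodule K V} (h : IsCompl A B) (t : Module.End K A)
    (b : B) : extEnd h t (b : V) = (b : V) := by
  simp [extEnd, Submodule.prodEquivOfIsCompl_symm_apply_right,
    Submodule.coe_prodEquivOfIsCompl']

lemma det_extEnd [FiniteDimensional K V] {A B : Submodule K V} (h : IsCompl A B)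
    (t : Module.End K A) : LinearMap.det (extEnd h t) = LinearMap.det t := by
  rw [extEnd, LinearMap.det_conj, _root_.det_prodMap, LinearMap.det_id, mul_one]

lemma ext_of_isCompl {A B : Submodule K V} (h : IsCompl A B) {φ ψ : Module.End K V}
    (hA : ∀ a ∈ A, φ a = ψ a) (hB : ∀ b ∈ B, φ b = ψ b) : φ = ψ := by
  ext v
  have hv : v ∈ A ⊔ B := by rw [h.sup_eq_top]; trivial
  obtain ⟨a, ha, b, hb, rfl⟩ := Submodule.mem_sup.mp hv
  rw [map_add, map_add, hA a ha, hB b hb]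

end DetHelpers

lemma finiteField_norm_surjective (F E : Type*) [Field F] [Fintype F] [Field E] [Fintype E]
    [Algebra F E] (c : F) (hc : c ≠ 0) : ∃ e : E, Algebra.norm F e = c := by
  classical
  have : Module.Finite F E := Module.Finite.of_finite
  set q : ℕ := Fintype.card F with hq
  set d : ℕ := Module.finrank F E with hd
  have hQ : Fintype.card E = q ^ d := Module.card_eq_pow_finrank
  have hq2 : 2 ≤ q := Fintype.one_lt_card
  have hd1 : 1 ≤ d := Module.finrank_pos
  obtain ⟨p, hp⟩ := CharP.exists F
  obtain ⟨k, hpprime, hcardF⟩ := FiniteField.card F p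
  haveI : CharP E p := charP_of_injective_algebraMap (algebraMap F E).injective p
  haveI : Fact p.Prime := ⟨hpprime⟩
  haveI : ExpChar E p := ExpChar.prime hpprime
  have hfrob : ∀ (a : F) (j : ℕ), a ^ q ^ j = a := fun a j => FiniteField.pow_card_pow j a
  have halg : ∀ j : ℕ, ∀ a : F, (iterateFrobenius E p ((k : ℕ) * j)) (algebraMap F E a)
      = algebraMap F E a := by
    intro j a
    rw [_root_.iterateFrobenius_def, ← map_pow, pow_mul, ← hcardF, ← hq, hfrob]
  let σA : ℕ → (E →ₐ[F] E) := fun j => AlgHom.mk (iterateFrobenius E p ((k : ℕ) * j)) (halg j)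
  have hσA : ∀ (j : ℕ) (x : E), σA j x = x ^ q ^ j := by
    intro j x
    show iterateFrobenius E p ((k : ℕ) * j) x = _
    rw [_root_.iterateFrobenius_def, pow_mul, ← hcardF, ← hq]
  let σ : Fin d → (E ≃ₐ[F] E) := fun i => AlgEquiv.ofBijective (σA i)
    ((Finite.injective_iff_bijective).mp (σA i).toRingHom.injective)
  have hσ : ∀ (i : Fin d) (x : E), σ i x = x ^ q ^ (i : ℕ) := fun i x => hσA i x
  obtain ⟨γ, hγ⟩ := IsCyclic.exists_generator (α := Eˣ)
  have hordγ : orderOf γ = q ^ d - 1 := by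
    rw [orderOf_eq_card_of_forall_mem_zpowers hγ, Nat.card_eq_fintype_card,
      Fintype.card_units, hQ]
  have hboundp : 2 ≤ d → ∀ i : Fin d, q ^ (i : ℕ) < q ^ d - 1 := by
    intro hd2 i
    have h1 : q ^ (i : ℕ) ≤ q ^ (d - 1) := Nat.pow_le_pow_right (by omega) (by omega)
    have h2 : q ^ (d - 1) * 2 ≤ q ^ (d - 1) * q := Nat.mul_le_mul_left _ hq2
    have h3 : q ^ (d - 1) * q = q ^ d := by rw [← pow_succ]; congr 1; omega
    have h4 : 2 ≤ q ^ (d - 1) := le_trans hq2 (by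
      calc q = q ^ 1 := (pow_one q).symm
        _ ≤ q ^ (d - 1) := Nat.pow_le_pow_right (by omega) (by omega))
    omega
  have hσinj : Function.Injective σ := by
    have key : ∀ i j : Fin d, σ i = σ j → (i : ℕ) ≤ (j : ℕ) → i = j := by
      intro i j hij hle
      rcases Nat.eq_or_lt_of_le hle with heq | hlt
      · exact Fin.ext heq
      have hd2 : 2 ≤ d := by have := j.isLt; omega
      have hval : (γ : E) ^ q ^ (i : ℕ) = (γ : E) ^ q ^ (j : ℕ) := by
        rw [← hσ i, ← hσ j, hij]
      have huval : γ ^ q ^ (i : ℕ) = γ ^ q ^ (j : ℕ) := by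
        apply Units.ext; push_cast [Units.val_pow_eq_pow_val]; exact hval
      have hmod : q ^ (i : ℕ) ≡ q ^ (j : ℕ) [MOD orderOf γ] :=
        (pow_eq_pow_iff_modEq).mp huval
      rw [hordγ] at hmod
      have heq : q ^ (i : ℕ) = q ^ (j : ℕ) :=
        Nat.ModEq.eq_of_lt_of_lt hmod (hboundp hd2 i) (hboundp hd2 j)
      have : (i : ℕ) = (j : ℕ) := Nat.pow_right_injective hq2 heq
      exact Fin.ext this
    intro i j hij
    rcases le_total (i : ℕ) (j : ℕ) with h | h
    · exact key i j hij h
    · exact (key j i hij.symm h).symm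
  have hσbij : Function.Bijective σ := by
    rw [Fintype.bijective_iff_injective_and_card]
    exact ⟨hσinj, by rw [Fintype.card_fin, ← Nat.card_eq_fintype_card, IsGalois.card_aut_eq_finrank]⟩
  set s : ℕ := ∑ i ∈ Finset.range d, q ^ i with hs
  have hnorm : ∀ e : E, algebraMap F E (Algebra.norm F e) = e ^ s := by
    intro e
    rw [Algebra.norm_eq_prod_automorphisms]
    rw [← Fintype.prod_bijective σ hσbij _ (fun τ => τ e) (fun i => rfl)]
    simp_rw [hσ]
    rw [Finset.prod_pow_eq_pow_sum, hs, Fin.sum_univ_eq_sum_range]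
  have hsQ : s * (q - 1) = q ^ d - 1 := by
    have hZ : (s : ℤ) * ((q : ℤ) - 1) = (q : ℤ) ^ d - 1 := by
      rw [hs]; push_cast; exact geom_sum_mul (q : ℤ) d
    have h1 : ((q - 1 : ℕ) : ℤ) = (q : ℤ) - 1 := by
      have : (1 : ℕ) ≤ q := by omega
      push_cast [Nat.cast_sub this]; ring
    have h2 : ((q ^ d - 1 : ℕ) : ℤ) = (q : ℤ) ^ d - 1 := by
      have : (1 : ℕ) ≤ q ^ d := Nat.one_le_pow _ _ (by omega)
      push_cast [Nat.cast_sub this]; ring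
    have := hZ
    rw [← h1, ← h2, ← Nat.cast_mul] at this
    exact_mod_cast this
  have hqd2 : 2 ≤ q ^ d := le_trans hq2 (by calc q = q ^ 1 := (pow_one q).symm
                                                _ ≤ q ^ d := Nat.pow_le_pow_right (by omega) hd1)
  have hspos : 0 < s := by
    rcases Nat.eq_zero_or_pos s with h | h
    · exfalso; rw [h, zero_mul] at hsQ; omega
    · exact h
  -- the norm as a monoid hom on units
  let NU : Eˣ →* Fˣ := Units.map (Algebra.norm F : E →* F)
  let ι : Fˣ →* Eˣ := Units.map ((algebraMap F E : F →+* E) : F →* E)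
  have hιinj : Function.Injective ι := Units.map_injective (algebraMap F E).injective
  have hkey : ι (NU γ) = γ ^ s := by
    apply Units.ext
    show algebraMap F E (Algebra.norm F (γ : E)) = ((γ ^ s : Eˣ) : E)
    rw [hnorm, Units.val_pow_eq_pow_val]
  have hsdvd : s ∣ q ^ d - 1 := ⟨q - 1, hsQ.symm⟩
  have hordNU : orderOf (NU γ) = q - 1 := by
    have h1 : orderOf (NU γ) = orderOf (γ ^ s) := by
      rw [← hkey]; exact (orderOf_injective ι hιinj (NU γ)).symm
    rw [h1, orderOf_pow, hordγ, Nat.gcd_eq_right hsdvd]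
    rw [← hsQ, Nat.mul_div_cancel_left _ hspos]
  have hcardFu : Nat.card Fˣ = q - 1 := by
    rw [Nat.card_eq_fintype_card, Fintype.card_units]
  have htop : Subgroup.zpowers (NU γ) = ⊤ := by
    apply Subgroup.eq_top_of_card_eq
    rw [Nat.card_zpowers, hordNU, hcardFu]
  set cu : Fˣ := Units.mk0 c hc with hcu
  have : cu ∈ Subgroup.zpowers (NU γ) := by rw [htop]; trivial
  obtain ⟨j, hj⟩ := Subgroup.mem_zpowers_iff.mp this
  refine ⟨((γ ^ j : Eˣ) : E), ?_⟩
  have h5 : NU (γ ^ j) = cu := by rw [map_zpow]; exact hj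
  have h6 := congrArg Units.val h5
  simpa only [NU, Units.coe_map, MonoidHom.coe_coe, hcu, Units.val_mk0] using h6

set_option maxHeartbeats 2000000 in
lemma exists_commute_det {F : Type} [Field F] [Fintype F] {V : Type} [AddCommGroup V]
    [Module F V] [FiniteDimensional F V] [Nontrivial V] (f : Module.End F V)
    (hsq : Squarefree (minpoly F f)) (c : F) (hc : c ≠ 0) :
    ∃ z : Module.End F V, f * z = z * f ∧ LinearMap.det z = c := by
  classical
  set μ := minpoly F f with hμdef
  haveI : Nontrivial (Module.End F V) := by
    obtain ⟨v, hv⟩ := exists_ne (0 : V)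
    exact ⟨1, 0, fun h => hv (by simpa using congrFun (congrArg DFunLike.coe h) v)⟩
  have hint : IsIntegral F f := IsIntegral.of_finite F f
  have hμ0 : μ ≠ 0 := minpoly.ne_zero hint
  have hμu : ¬ IsUnit μ := by
    rw [Polynomial.isUnit_iff_degree_eq_zero]
    have := minpoly.degree_pos hint
    intro h; rw [h] at this; exact lt_irrefl _ this
  obtain ⟨π, hπirr, hπdvd⟩ := WfDvdMonoid.exists_irreducible_factor hμu hμ0
  obtain ⟨r, hμeq⟩ := hπdvd
  have hπ0 : π ≠ 0 := fun h => hμ0 (by rw [hμeq, h, zero_mul])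
  have hr0 : r ≠ 0 := fun h => hμ0 (by rw [hμeq, h, mul_zero])
  have hcop : IsCoprime π r := by
    rw [hπirr.coprime_iff_not_dvd]
    rintro ⟨e, he⟩
    exact hπirr.not_isUnit (hsq π ⟨e, by rw [hμeq, he]; ring⟩)
  obtain ⟨a, b, hab⟩ := hcop
  set W := LinearMap.ker (aeval f π) with hWdef
  set W' := LinearMap.ker (aeval f r) with hW'def
  have hμf : aeval f μ = 0 := minpoly.aeval F f
  -- splitting
  have hsplitW : ∀ v : V, aeval f (b * r) v ∈ W := by
    intro v
    rw [LinearMap.mem_ker, ← Module.End.mul_apply, ← map_mul]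
    have h1 : π * (b * r) = b * μ := by rw [hμeq]; ring
    rw [h1, map_mul, Module.End.mul_apply, hμf, LinearMap.zero_apply, map_zero]
  have hsplitW' : ∀ v : V, aeval f (a * π) v ∈ W' := by
    intro v
    rw [LinearMap.mem_ker, ← Module.End.mul_apply, ← map_mul]
    have h1 : r * (a * π) = a * μ := by rw [hμeq]; ring
    rw [h1, map_mul, Module.End.mul_apply, hμf, LinearMap.zero_apply, map_zero]
  have hsplit : ∀ v : V, v = aeval f (b * r) v + aeval f (a * π) v := by
    intro v
    have h1 : aeval f (b * r) + aeval f (a * π) = 1 := by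
      rw [← map_add, show b * r + a * π = 1 by rw [← hab]; ring, map_one]
    calc v = (aeval f (b * r) + aeval f (a * π)) v := by rw [h1]; rfl
    _ = _ := by rw [LinearMap.add_apply]
  have hcompl : IsCompl W W' := by
    constructor
    · rw [disjoint_iff_inf_le]
      intro v hv
      obtain ⟨hv1, hv2⟩ := Submodule.mem_inf.mp hv
      have h1 : aeval f (a * π) v = 0 := by
        rw [map_mul, Module.End.mul_apply, LinearMap.mem_ker.mp hv1, map_zero]
      have h2 : aeval f (b * r) v = 0 := by
        rw [map_mul, Module.End.mul_apply, LinearMap.mem_ker.mp hv2, map_zero]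
      have := hsplit v
      rw [h1, h2, add_zero] at this
      simpa [Submodule.mem_bot] using this
    · rw [codisjoint_iff, eq_top_iff]
      intro v _
      exact Submodule.mem_sup.mpr ⟨_, hsplitW v, _, hsplitW' v, (hsplit v).symm⟩
  -- W is nonzero
  have hWne : W ≠ ⊥ := by
    intro hbot
    have hinj : Function.Injective (aeval f π) := by
      rw [← LinearMap.ker_eq_bot]; exact hbot
    have hrann : aeval f r = 0 := by
      ext v
      apply hinj
      rw [← Module.End.mul_apply, ← map_mul, ← hμeq, hμf]
      simp
    have hdvd2 : μ ∣ r := minpoly.dvd F f hrann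
    have hle : μ.natDegree ≤ r.natDegree := Polynomial.natDegree_le_of_dvd hdvd2 hr0
    have hπdeg : 0 < π.natDegree := hπirr.natDegree_pos
    rw [hμeq, Polynomial.natDegree_mul hπ0 hr0] at hle
    omega
  -- invariance
  have hcommf : ∀ s : F[X], aeval f s * f = f * aeval f s := by
    intro s
    have : aeval f (s * X) = aeval f (X * s) := by rw [mul_comm]
    simpa [map_mul, aeval_X] using this
  have hWinv : ∀ v ∈ W, f v ∈ W := by
    intro v hv
    rw [LinearMap.mem_ker]
    have h1 : (aeval f π * f) v = (f * aeval f π) v := by rw [hcommf]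
    simp only [Module.End.mul_apply] at h1
    rw [h1, LinearMap.mem_ker.mp hv, map_zero]
  have hW'inv : ∀ v ∈ W', f v ∈ W' := by
    intro v hv
    rw [LinearMap.mem_ker]
    have h1 : (aeval f r * f) v = (f * aeval f r) v := by rw [hcommf]
    simp only [Module.End.mul_apply] at h1
    rw [h1, LinearMap.mem_ker.mp hv, map_zero]
  -- the field E = F[X]/(π)
  haveI hfactπ : Fact (Irreducible π) := ⟨hπirr⟩
  set fW : Module.End F W := f.restrict hWinv with hfWdef
  have hfWaeval : ∀ (s : F[X]) (w : W), ((aeval fW s) w : V) = aeval f s (w : V) := by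
    intro s
    induction s using Polynomial.induction_on' with
    | add p q hp hq =>
      intro w
      simp only [map_add, LinearMap.add_apply, Submodule.coe_add, hp, hq]
    | monomial n t =>
      intro w
      rw [aeval_monomial, aeval_monomial]
      simp only [Module.End.mul_apply, Module.algebraMap_end_apply, Submodule.coe_smul, hfWdef,
        Module.End.pow_restrict n hWinv, LinearMap.restrict_coe_apply]
  have haevalfWπ : aeval fW π = 0 := by
    apply LinearMap.ext
    intro w
    apply Subtype.ext
    simp only [LinearMap.zero_apply, ZeroMemClass.coe_zero]
    rw [hfWaeval π w]
    exact LinearMap.mem_ker.mp w.2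
  let φ : AdjoinRoot π →+* Module.End F W :=
    Ideal.Quotient.lift (Ideal.span {π}) (aeval fW).toRingHom
      (by
        intro s hs
        obtain ⟨t, rfl⟩ := Ideal.mem_span_singleton'.mp hs
        show aeval fW (t * π) = 0
        rw [map_mul, haevalfWπ, mul_zero])
  have hφmk : ∀ s : F[X], φ (AdjoinRoot.mk π s) = aeval fW s := fun s => rfl
  letI : Module (AdjoinRoot π) ↥W := Module.compHom ↥W φ
  have hsmul : ∀ (x : AdjoinRoot π) (w : ↥W), x • w = φ x w := fun x w => rfl
  haveI : IsScalarTower F (AdjoinRoot π) ↥W := by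
    constructor
    intro t x w
    rw [Algebra.smul_def, hsmul, hsmul, map_mul]
    have h1 : φ (algebraMap F (AdjoinRoot π) t) = algebraMap F (Module.End F ↥W) t := by
      rw [AdjoinRoot.algebraMap_eq]
      show φ (AdjoinRoot.mk π (C t)) = _
      rw [hφmk, aeval_C]
    rw [Module.End.mul_apply, h1, Module.algebraMap_end_apply]
  haveI : SMulCommClass F (AdjoinRoot π) ↥W := by
    constructor
    intro t x w
    rw [hsmul, hsmul]
    exact ((φ x).map_smul t w).symm
  haveI : FiniteDimensional (AdjoinRoot π) ↥W :=
    Module.Finite.of_restrictScalars_finite F (AdjoinRoot π) ↥W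
  haveI : Nontrivial ↥W := Submodule.nontrivial_iff_ne_bot.mpr hWne
  haveI : FiniteDimensional F (AdjoinRoot π) :=
    Module.Finite.of_basis (AdjoinRoot.powerBasis hπ0).basis
  haveI : Finite (AdjoinRoot π) := Module.finite_of_finite F
  letI : Fintype (AdjoinRoot π) := Fintype.ofFinite _
  obtain ⟨e₀, he₀⟩ := finiteField_norm_surjective F (AdjoinRoot π) c hc
  -- a line in W and its complement
  obtain ⟨w₀, hw₀⟩ := exists_ne (0 : ↥W)
  set L : Submodule (AdjoinRoot π) ↥W := Submodule.span (AdjoinRoot π) {w₀} with hLdef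
  obtain ⟨U, hLU⟩ := Submodule.exists_isCompl L
  set AF := L.restrictScalars F with hAFdef
  set BF := U.restrictScalars F with hBFdef
  have hAB : IsCompl AF BF := by
    constructor
    · rw [disjoint_iff_inf_le]
      intro w hw
      obtain ⟨h1, h2⟩ := Submodule.mem_inf.mp hw
      have := Submodule.disjoint_def.mp hLU.disjoint w h1 h2
      simpa [Submodule.mem_bot] using this
    · rw [codisjoint_iff, eq_top_iff]
      intro w _
      have : w ∈ L ⊔ U := by rw [hLU.sup_eq_top]; trivial
      obtain ⟨x, hx, y, hy, rfl⟩ := Submodule.mem_sup.mp this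
      exact Submodule.mem_sup.mpr ⟨x, hx, y, hy, rfl⟩
  -- the endomorphism t = e₀ • on AF
  let t : Module.End F ↥AF :=
    { toFun := fun w => ⟨e₀ • (w : ↥W), L.smul_mem e₀ w.2⟩
      map_add' := fun u v => by
        apply Subtype.ext; simp [smul_add]
      map_smul' := fun s v => by
        apply Subtype.ext
        simp only [Submodule.coe_smul, RingHom.id_apply, SetLike.val_smul]
        exact (smul_comm s e₀ (v : ↥W)).symm }
  set T : Module.End F ↥W := extEnd hAB t with hTdef
  set z : Module.End F V := extEnd hcompl T with hzdef
  have hTA : ∀ (w : ↥W) (hw : w ∈ AF), T w = e₀ • w := by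
    intro w hw
    have := extEnd_apply_left hAB t ⟨w, hw⟩
    exact this
  have hTB : ∀ (w : ↥W), w ∈ BF → T w = w := by
    intro w hw
    have := extEnd_apply_right hAB t ⟨w, hw⟩
    simpa using this
  -- T commutes with fW
  have hφroot : φ (AdjoinRoot.root π) = fW := by
    show φ (AdjoinRoot.mk π X) = fW
    rw [hφmk, aeval_X]
  have hrootsmul : ∀ w : ↥W, AdjoinRoot.root π • w = fW w := by
    intro w; rw [hsmul, hφroot]
  have hTfW : T * fW = fW * T := by
    apply ext_of_isCompl hAB
    · intro w hw
      have hw' : (w : ↥W) ∈ L := hw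
      simp only [Module.End.mul_apply]
      rw [← hrootsmul, hTA _ (L.smul_mem _ hw'), hTA _ hw, ← hrootsmul]
      rw [smul_smul, smul_smul, mul_comm]
    · intro w hw
      have hw' : (w : ↥W) ∈ U := hw
      simp only [Module.End.mul_apply]
      rw [← hrootsmul, hTB _ (U.smul_mem _ hw'), hTB _ hw, ← hrootsmul]
  refine ⟨z, ?_, ?_⟩
  · -- commutation
    apply ext_of_isCompl hcompl
    · intro v hv
      simp only [Module.End.mul_apply]
      have hzv : z v = (T ⟨v, hv⟩ : V) := extEnd_apply_left hcompl T ⟨v, hv⟩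
      have hfv : f v ∈ W := hWinv v hv
      have hzfv : z (f v) = (T ⟨f v, hfv⟩ : V) := extEnd_apply_left hcompl T ⟨f v, hfv⟩
      rw [hzv, hzfv]
      have h1 : (⟨f v, hfv⟩ : ↥W) = fW ⟨v, hv⟩ := rfl
      rw [h1]
      have h2 : f (T ⟨v, hv⟩ : V) = (fW (T ⟨v, hv⟩) : V) :=
        (LinearMap.restrict_coe_apply f hWinv _).symm
      rw [h2]
      have h3 : fW (T ⟨v, hv⟩) = T (fW ⟨v, hv⟩) := by
        have := congrFun (congrArg DFunLike.coe hTfW.symm) (⟨v, hv⟩ : ↥W)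
        simpa [Module.End.mul_apply] using this
      rw [h3]
    · intro v hv
      simp only [Module.End.mul_apply]
      have h1 : z v = v := by
        have := extEnd_apply_right hcompl T ⟨v, hv⟩; simpa using this
      have h2 : z (f v) = f v := by
        have := extEnd_apply_right hcompl T ⟨f v, hW'inv v hv⟩; simpa using this
      rw [h1, h2]
  · -- determinant
    rw [hzdef, det_extEnd, hTdef, det_extEnd]
    -- det t = norm e₀ = c
    let ψ : AdjoinRoot π ≃ₗ[F] ↥AF :=
      (((LinearEquiv.toSpanNonzeroSingleton (AdjoinRoot π) ↥W w₀ hw₀).trans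
        (Submodule.restrictScalarsEquiv F (AdjoinRoot π) ↥W L).symm).restrictScalars F)
    have ht : t = ψ.toLinearMap ∘ₗ (Algebra.lmul F (AdjoinRoot π) e₀) ∘ₗ
        ψ.symm.toLinearMap := by
      apply LinearMap.ext
      intro w
      obtain ⟨x, rfl⟩ := ψ.surjective w
      simp only [LinearMap.coe_comp, Function.comp_apply, LinearEquiv.coe_coe,
        LinearEquiv.symm_apply_apply]
      apply Subtype.ext
      have hψ : ∀ y : AdjoinRoot π, ((ψ y : ↥AF) : ↥W) = y • w₀ := fun y => rfl
      show (e₀ • ((ψ x : ↥AF) : ↥W)) = ((ψ (e₀ * x) : ↥AF) : ↥W)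
      rw [hψ, hψ, smul_smul]
    rw [ht, LinearMap.det_conj]
    rw [← Algebra.norm_apply, he₀]


/-- Let `p` be an odd prime, `q` a power of `p`, and `g ∈ SL n (F_q)` a
semisimple element (its order is coprime to `p`). Then the `SL n (F_q)`-conjugacy class of
`g` is invariant under conjugation by `GL n (F_q)`. Here `SL n (F_q)` is realized as the
kernel of the determinant on `GL n (F_q)`. -/
theorem semisimple_SL_class_GL_invariant
    {F : Type} [Field F] [Fintype F] {p q k n : ℕ}
    (hp : p.Prime) (hpodd : Odd p) (hk : 0 < k) (hq : q = p ^ k)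
    (hcard : Fintype.card F = q)
    (g : Matrix.GeneralLinearGroup (Fin n) F)
    (hgSL : g ∈ (Matrix.GeneralLinearGroup.det :
      Matrix.GeneralLinearGroup (Fin n) F →* Fˣ).ker)
    (hss : Nat.Coprime (orderOf g) p) :
    ∀ x : Matrix.GeneralLinearGroup (Fin n) F,
      ∃ h ∈ (Matrix.GeneralLinearGroup.det :
        Matrix.GeneralLinearGroup (Fin n) F →* Fˣ).ker,
        x * g * x⁻¹ = h * g * h⁻¹ := by
  classical
  intro x
  rcases Nat.eq_zero_or_pos n with hn0 | hn
  · subst hn0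
    haveI : Subsingleton (Matrix (Fin 0) (Fin 0) F) := ⟨fun A B => by ext i; exact i.elim0⟩
    refine ⟨1, by simp [MonoidHom.mem_ker], Units.ext (Subsingleton.elim _ _)⟩
  · haveI : Nonempty (Fin n) := ⟨⟨0, hn⟩⟩
    -- the characteristic of F is p
    have hcF : CharP F (ringChar F) := ringChar.charP F
    obtain ⟨j, hcprime, hcardc⟩ := FiniteField.card F (ringChar F)
    have hrc : ringChar F = p := by
      have h1 : p ∣ (ringChar F) ^ (j : ℕ) := by
        rw [← hcardc, hcard, hq]
        exact dvd_pow_self p (by omega)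
      have h2 : p ∣ ringChar F := hp.dvd_of_dvd_pow h1
      exact ((Nat.prime_dvd_prime_iff_eq hp hcprime).mp h2).symm
    haveI hcharp : CharP F p := hrc ▸ hcF
    set m := orderOf g with hm
    have hm0 : 0 < m := orderOf_pos g
    have hmF : (m : F) ≠ 0 := by
      intro h0
      have hdvd : p ∣ m := (CharP.cast_eq_zero_iff F p m).mp h0
      have hdvd1 : p ∣ Nat.gcd m p := Nat.dvd_gcd hdvd dvd_rfl
      rw [hss] at hdvd1
      have := Nat.le_of_dvd one_pos hdvd1
      have := hp.two_le
      omega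
    set M : Matrix (Fin n) (Fin n) F := (g : Matrix (Fin n) (Fin n) F) with hM
    set f : Module.End F (Fin n → F) := Matrix.toLinAlgEquiv' M with hf
    have hfm : f ^ m = 1 := by
      rw [hf, ← map_pow]
      have hMm : M ^ m = 1 := by
        rw [hM, ← Units.val_pow_eq_pow_val, pow_orderOf_eq_one g, Units.val_one]
      rw [hMm, map_one]
    have hann : aeval f ((X : F[X]) ^ m - 1) = 0 := by
      rw [map_sub, map_one, aeval_X_pow, hfm, sub_self]
    have hXm : Squarefree ((X : F[X]) ^ m - 1) :=
      (Polynomial.X_pow_sub_one_separable_iff.mpr hmF).squarefree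
    have hsq : Squarefree (minpoly F f) :=
      hXm.squarefree_of_dvd (minpoly.dvd F f hann)
    obtain ⟨z, hzcomm, hzdet⟩ := exists_commute_det f hsq
      ((Matrix.GeneralLinearGroup.det x : Fˣ) : F) (Units.ne_zero _)
    set Z : Matrix (Fin n) (Fin n) F := LinearMap.toMatrixAlgEquiv' z with hZ
    have hfM : LinearMap.toMatrixAlgEquiv' f = M := by
      rw [hf]
      show LinearMap.toMatrixAlgEquiv' (LinearMap.toMatrixAlgEquiv'.symm M) = M
      exact LinearMap.toMatrixAlgEquiv'.apply_symm_apply M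
    have hZdet : Z.det = ((Matrix.GeneralLinearGroup.det x : Fˣ) : F) := by
      have h1 : Z = LinearMap.toMatrix' z := rfl
      rw [h1, LinearMap.det_toMatrix']
      exact hzdet
    have hcommM : M * Z = Z * M := by
      have h1 := congrArg LinearMap.toMatrixAlgEquiv' hzcomm
      rw [map_mul, map_mul, hfM] at h1
      exact h1
    have hZunit : IsUnit Z := by
      rw [Matrix.isUnit_iff_isUnit_det, hZdet]
      exact (Matrix.GeneralLinearGroup.det x).isUnit
    set u : Matrix.GeneralLinearGroup (Fin n) F := hZunit.unit with hu
    have huval : (u : Matrix (Fin n) (Fin n) F) = Z := hZunit.unit_spec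
    have hdetu : Matrix.GeneralLinearGroup.det u = Matrix.GeneralLinearGroup.det x := by
      apply Units.ext
      show ((u : Matrix (Fin n) (Fin n) F)).det = _
      rw [huval, hZdet]
    have hcomm_ug : Commute u g := by
      apply Units.ext
      show (u : Matrix (Fin n) (Fin n) F) * (g : Matrix (Fin n) (Fin n) F)
        = (g : Matrix (Fin n) (Fin n) F) * (u : Matrix (Fin n) (Fin n) F)
      rw [huval, ← hM, hcommM]
    refine ⟨x * u⁻¹, ?_, ?_⟩
    · rw [MonoidHom.mem_ker, map_mul, map_inv, hdetu]
      exact mul_inv_cancel _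
    · have hinv : (x * u⁻¹)⁻¹ = u * x⁻¹ := by rw [mul_inv_rev, inv_inv]
      rw [hinv]
      have hgu : u⁻¹ * g * u = g := by
        have h1 : g * u = u * g := hcomm_ug.symm.eq
        calc u⁻¹ * g * u = u⁻¹ * (g * u) := by group
        _ = u⁻¹ * (u * g) := by rw [h1]
        _ = g := by group
      calc x * g * x⁻¹ = x * (u⁻¹ * g * u) * x⁻¹ := by rw [hgu]
      _ = x * u⁻¹ * g * (u * x⁻¹) := by group
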